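/- Let n_s ≥ 3, and let f̂: [0,1]^d → ℝ^n be realized by a ReLU network of depth L and width N. Then for every ε > 0 there exists a PLN-Net f of depth 2L, norm size n_s, and width 3·n_s·N from ℝ^d to ℝ^n such that sup_{x ∈ [0,1]^d} ‖f(x) − f̂(x)‖_∞ < ε. -/

import Mathlib

/-- Layer normalization on `ℝ^n`: `LN(h)ⱼ = (hⱼ − μ)/σ` when `σ ≠ 0`, and `0` when `σ = 0`. -/
noncomputable def LN {n : ℕ} (h : Fin n → ℝ) : Fin n → ℝ :=
  let μ : ℝ := (∑ i, h i) / n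
  let σ : ℝ := Real.sqrt ((∑ i, (h i - μ) ^ 2) / n)
  if σ = 0 then 0 else fun j => (h j - μ) / σ

/-- Parallel layer normalization: `N` consecutive blocks of size `ns`, `LN` on each. -/
noncomputable def PLN (ns N : ℕ) (h : Fin (N * ns) → ℝ) : Fin (N * ns) → ℝ :=
  fun i => LN (fun j : Fin ns => h (finProdFinEquiv (i.divNat, j))) i.modNat

/-- `PhiNet φ N L d m f`: `f : ℝ^d → ℝ^m` is a `φ`-network of depth `L`, each hidden
dimension being at most `N`. -/
inductive PhiNet (φ : ℝ → ℝ) (N : ℕ) : ℕ → (d m : ℕ) → ((Fin d → ℝ) → (Fin m → ℝ)) → Prop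
  | affine {d m : ℕ} (W : Matrix (Fin m) (Fin d) ℝ) (b : Fin m → ℝ) :
      PhiNet φ N 0 d m (fun x => W.mulVec x + b)
  | layer {L d k m : ℕ} (hk : k ≤ N) (W : Matrix (Fin k) (Fin d) ℝ) (b : Fin k → ℝ)
      (g : (Fin k → ℝ) → (Fin m → ℝ)) (hg : PhiNet φ N L k m g) :
      PhiNet φ N (L + 1) d m (fun x => g (fun i => φ ((W.mulVec x + b) i)))

/-- `PLNNet ns N L d m f`: `f : ℝ^d → ℝ^m` is a PLN-Net of depth `L` and norm size `ns`,
each hidden dimension being a multiple of `ns` of size at most `ns·N`. -/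
inductive PLNNet (ns N : ℕ) : ℕ → (d m : ℕ) → ((Fin d → ℝ) → (Fin m → ℝ)) → Prop
  | affine {d m : ℕ} (W : Matrix (Fin m) (Fin d) ℝ) (b : Fin m → ℝ) :
      PLNNet ns N 0 d m (fun x => W.mulVec x + b)
  | layer {L d k m : ℕ} (hk : k ≤ N) (W : Matrix (Fin (k * ns)) (Fin d) ℝ)
      (b : Fin (k * ns) → ℝ)
      (g : (Fin (k * ns) → ℝ) → (Fin m → ℝ)) (hg : PLNNet ns N L (k * ns) m g) :
      PLNNet ns N (L + 1) d m (fun x => g (PLN ns k (W.mulVec x + b)))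

namespace PLNA

variable {ns : ℕ}

def row3 (ns : ℕ) (a b c : ℝ) : Fin ns → ℝ :=
  fun j => if j.val = 0 then a else if j.val = 1 then b else if j.val = 2 then c else 0

lemma row3_sum (hns : 3 ≤ ns) (a b c : ℝ) : ∑ j, row3 ns a b c j = a + b + c := by
  have h0 : (0:ℕ) < ns := by omega
  have h1 : (1:ℕ) < ns := by omega
  have h2 : (2:ℕ) < ns := by omega
  set i0 : Fin ns := ⟨0, h0⟩
  set i1 : Fin ns := ⟨1, h1⟩
  set i2 : Fin ns := ⟨2, h2⟩
  have hsub : ({i0, i1, i2} : Finset (Fin ns)) ⊆ Finset.univ := Finset.subset_univ _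
  rw [← Finset.sum_subset hsub (by
    intro x _ hx
    simp only [Finset.mem_insert, Finset.mem_singleton] at hx
    push_neg at hx
    obtain ⟨hx0, hx1, hx2⟩ := hx
    have : x.val ≠ 0 ∧ x.val ≠ 1 ∧ x.val ≠ 2 := by
      refine ⟨fun h => hx0 (Fin.ext h), fun h => hx1 (Fin.ext h), fun h => hx2 (Fin.ext h)⟩
    simp [row3, this.1, this.2.1, this.2.2])]
  have d01 : i0 ≠ i1 := by simp [i0, i1, Fin.ext_iff]
  have d02 : i0 ≠ i2 := by simp [i0, i2, Fin.ext_iff]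
  have d12 : i1 ≠ i2 := by simp [i1, i2, Fin.ext_iff]
  rw [Finset.sum_insert (by simp [d01, d02]), Finset.sum_insert (by simp [d12]),
    Finset.sum_singleton]
  simp [row3, i0, i1, i2]
  ring

lemma row3_apply0 (hns : 3 ≤ ns) (a b c : ℝ) : row3 ns a b c ⟨0, by omega⟩ = a := by
  simp [row3]

lemma row3_apply1 (hns : 3 ≤ ns) (a b c : ℝ) : row3 ns a b c ⟨1, by omega⟩ = b := by
  simp [row3]

lemma row3_sq (a b c : ℝ) (j : Fin ns) :
    row3 ns a b c j ^ 2 = row3 ns (a ^ 2) (b ^ 2) (c ^ 2) j := by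
  unfold row3; split_ifs <;> simp

lemma LN_row3 (hns : 3 ≤ ns) (a b c : ℝ) (hsum : a + b + c = 0) (j : Fin ns) :
    LN (row3 ns a b c) j =
      if Real.sqrt ((a ^ 2 + b ^ 2 + c ^ 2) / ns) = 0 then 0
      else row3 ns a b c j / Real.sqrt ((a ^ 2 + b ^ 2 + c ^ 2) / ns) := by
  have hnsR : (0:ℝ) < (ns:ℝ) := Nat.cast_pos.2 (by omega)
  have hμ : (∑ i, row3 ns a b c i) / (ns:ℝ) = 0 := by
    rw [row3_sum hns, hsum, zero_div]
  have hsq : ∑ i, (row3 ns a b c i - (∑ i, row3 ns a b c i) / (ns:ℝ)) ^ 2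
      = a ^ 2 + b ^ 2 + c ^ 2 := by
    rw [hμ]
    simp only [sub_zero]
    calc ∑ i, row3 ns a b c i ^ 2 = ∑ i, row3 ns (a^2) (b^2) (c^2) i := by
          exact Finset.sum_congr rfl fun i _ => row3_sq a b c i
      _ = a^2 + b^2 + c^2 := row3_sum hns _ _ _
  show (if Real.sqrt ((∑ i, (row3 ns a b c i - (∑ i, row3 ns a b c i) / (ns:ℝ)) ^ 2) / ns) = 0
    then (0 : Fin ns → ℝ)
    else fun j => (row3 ns a b c j - (∑ i, row3 ns a b c i) / (ns:ℝ)) /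
      Real.sqrt ((∑ i, (row3 ns a b c i - (∑ i, row3 ns a b c i) / (ns:ℝ)) ^ 2) / ns)) j =
    _
  rw [hsq, hμ]
  split_ifs with h
  · simp
  · simp

end PLNA
namespace PLNA

noncomputable def chi (T v : ℝ) : ℝ := v / Real.sqrt (T ^ 2 + v ^ 2)



lemma sqrtq_pos {T : ℝ} (hT : 0 < T) (v : ℝ) : 0 < Real.sqrt (T ^ 2 + v ^ 2) :=
  Real.sqrt_pos.2 (by positivity)

lemma le_sqrtq {T : ℝ} (hT : 0 ≤ T) (v : ℝ) : T ≤ Real.sqrt (T ^ 2 + v ^ 2) := by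
  have := Real.sqrt_le_sqrt (show T ^ 2 ≤ T ^ 2 + v ^ 2 by nlinarith)
  rwa [Real.sqrt_sq hT] at this

lemma abs_le_sqrtq (T v : ℝ) : |v| ≤ Real.sqrt (T ^ 2 + v ^ 2) := by
  have := Real.sqrt_le_sqrt (show v ^ 2 ≤ T ^ 2 + v ^ 2 by nlinarith)
  rwa [Real.sqrt_sq_eq_abs] at this

lemma chi_zero (T : ℝ) : chi T 0 = 0 := by simp [chi]

lemma chi_lin {T : ℝ} (hT : 0 < T) (v : ℝ) :
    |T * chi T v - v| ≤ |v| ^ 3 / (2 * T ^ 2) := by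
  set S := Real.sqrt (T ^ 2 + v ^ 2) with hSdef
  have hS : 0 < S := sqrtq_pos hT v
  have hTS : T ≤ S := le_sqrtq hT.le v
  have hS2 : S ^ 2 = T ^ 2 + v ^ 2 := Real.sq_sqrt (by positivity)
  have key : T * chi T v - v = -v ^ 3 / (S * (T + S)) := by
    rw [chi, ← hSdef]
    have h1 : S ≠ 0 := hS.ne'
    have h2 : T + S ≠ 0 := by positivity
    field_simp
    ring_nf
    linear_combination (-v) * hS2
  rw [key, abs_div, abs_neg, abs_pow, abs_of_pos (show (0:ℝ) < S * (T + S) by positivity)]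
  exact div_le_div_of_nonneg_left (by positivity) (by positivity) (by nlinarith)

lemma chi_lip {T : ℝ} (hT : 0 < T) (a b : ℝ) :
    |chi T a - chi T b| ≤ 2 * |a - b| / Real.sqrt (T ^ 2 + a ^ 2) := by
  set A := Real.sqrt (T ^ 2 + a ^ 2) with hA
  set B := Real.sqrt (T ^ 2 + b ^ 2) with hB
  have hApos : 0 < A := sqrtq_pos hT a
  have hBpos : 0 < B := sqrtq_pos hT b
  have hA2 : A ^ 2 = T ^ 2 + a ^ 2 := Real.sq_sqrt (by positivity)
  have hB2 : B ^ 2 = T ^ 2 + b ^ 2 := Real.sq_sqrt (by positivity)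
  have haA : |a| ≤ A := abs_le_sqrtq T a
  have hbB : |b| ≤ B := abs_le_sqrtq T b
  have key : chi T a - chi T b = (a - b) * (B * (A + B) - b * (a + b)) / (A * B * (A + B)) := by
    rw [chi, chi, ← hA, ← hB]
    have h1 : A ≠ 0 := hApos.ne'
    have h2 : B ≠ 0 := hBpos.ne'
    have h3 : A + B ≠ 0 := by positivity
    field_simp
    ring_nf
    linear_combination b * hB2 - b * hA2
  rw [key, abs_div, abs_mul, abs_of_pos (show (0:ℝ) < A * B * (A + B) by positivity)]
  have hD : |B * (A + B) - b * (a + b)| ≤ 2 * B * (A + B) := by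
    have h1 : |b * (a + b)| ≤ B * (A + B) := by
      rw [abs_mul]
      have := abs_add_le a b
      nlinarith [abs_nonneg a, abs_nonneg b, abs_nonneg (a + b)]
    calc |B * (A + B) - b * (a + b)| ≤ |B * (A + B)| + |b * (a + b)| := abs_sub _ _
      _ ≤ 2 * B * (A + B) := by
          rw [abs_of_pos (show (0:ℝ) < B * (A + B) by positivity)]; nlinarith
  calc |a - b| * |B * (A + B) - b * (a + b)| / (A * B * (A + B))
      ≤ |a - b| * (2 * B * (A + B)) / (A * B * (A + B)) := by
        apply div_le_div_of_nonneg_right ?_ (by positivity)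
        exact mul_le_mul_of_nonneg_left hD (abs_nonneg _)
    _ = 2 * |a - b| / A := by field_simp


lemma sign_mul_abs (v : ℝ) : Real.sign v * |v| = v := by
  rcases lt_trichotomy v 0 with h | h | h
  · rw [Real.sign_of_neg h, abs_of_neg h]; ring
  · simp [h]
  · rw [Real.sign_of_pos h, abs_of_pos h]; ring

lemma LN_sign (hns : 3 ≤ ns) (v : ℝ) :
    LN (row3 ns v (-v) 0) ⟨0, by omega⟩ = Real.sqrt (ns / 2) * Real.sign v := by
  have hnsR : (0:ℝ) < (ns:ℝ) := Nat.cast_pos.2 (by omega)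
  rw [LN_row3 hns v (-v) 0 (by ring)]
  have hsq : v ^ 2 + (-v) ^ 2 + 0 ^ 2 = 2 * v ^ 2 := by ring
  rw [hsq, row3_apply0 hns]
  rcases eq_or_ne v 0 with hv | hv
  · simp [hv]
  · have hav : (0:ℝ) < |v| := abs_pos.2 hv
    have hpos : (0:ℝ) < 2 * v ^ 2 / ns := by positivity
    rw [if_neg (by positivity)]
    have habs : Real.sqrt (2 * v ^ 2 / ns) = |v| * Real.sqrt (2 / ns) := by
      rw [show (2 * v ^ 2 / (ns:ℝ)) = v ^ 2 * (2 / ns) by ring,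
        Real.sqrt_mul (sq_nonneg v), Real.sqrt_sq_eq_abs]
    rw [habs]
    have h2ns : (0:ℝ) < Real.sqrt (2 / ns) := Real.sqrt_pos.2 (by positivity)
    have hone : Real.sqrt ((ns:ℝ) / 2) * Real.sqrt (2 / ns) = 1 := by
      rw [← Real.sqrt_mul (by positivity)]
      rw [show ((ns:ℝ) / 2) * (2 / ns) = 1 by field_simp]
      exact Real.sqrt_one
    rw [div_eq_iff (by positivity : |v| * Real.sqrt (2 / (ns:ℝ)) ≠ 0)]
    calc v = (Real.sign v * |v|) * (Real.sqrt ((ns:ℝ) / 2) * Real.sqrt (2 / ns)) := by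
          rw [sign_mul_abs, hone, mul_one]
      _ = Real.sqrt (↑ns / 2) * Real.sign v * (|v| * Real.sqrt (2 / ↑ns)) := by ring

lemma LN_chi (hns : 3 ≤ ns) {R : ℝ} (hR : 0 < R) (v : ℝ) :
    LN (row3 ns (R + v) (R - v) (-(2 * R))) ⟨0, by omega⟩
      - LN (row3 ns (R + v) (R - v) (-(2 * R))) ⟨1, by omega⟩
      = Real.sqrt (2 * ns) * chi (Real.sqrt 3 * R) v := by
  have hnsR : (0:ℝ) < (ns:ℝ) := Nat.cast_pos.2 (by omega)
  rw [LN_row3 hns _ _ _ (by ring), LN_row3 hns _ _ _ (by ring)]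
  have hsq : (R + v) ^ 2 + (R - v) ^ 2 + (-(2 * R)) ^ 2 = 2 * v ^ 2 + 6 * R ^ 2 := by ring
  rw [hsq, row3_apply0 hns, row3_apply1 hns]
  have hpos : (0:ℝ) < (2 * v ^ 2 + 6 * R ^ 2) / ns := by positivity
  have hσ : (0:ℝ) < Real.sqrt ((2 * v ^ 2 + 6 * R ^ 2) / ns) := Real.sqrt_pos.2 hpos
  have hT2 : (Real.sqrt 3 * R) ^ 2 = 3 * R ^ 2 := by
    rw [mul_pow, Real.sq_sqrt (by norm_num : (0:ℝ) ≤ 3)]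
  have hQ : (0:ℝ) < Real.sqrt ((Real.sqrt 3 * R) ^ 2 + v ^ 2) := by
    apply Real.sqrt_pos.2
    have h3 : (0:ℝ) < Real.sqrt 3 * R := by
      have : (0:ℝ) < Real.sqrt 3 := Real.sqrt_pos.2 (by norm_num)
      positivity
    positivity
  have hkey : Real.sqrt (2 * ns) * Real.sqrt ((2 * v ^ 2 + 6 * R ^ 2) / ns)
      = 2 * Real.sqrt ((Real.sqrt 3 * R) ^ 2 + v ^ 2) := by
    rw [← Real.sqrt_mul (by positivity), hT2]
    rw [show (2 * (ns:ℝ)) * ((2 * v ^ 2 + 6 * R ^ 2) / ns) = 2 ^ 2 * (3 * R ^ 2 + v ^ 2) by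
      field_simp; ring]
    rw [Real.sqrt_mul (by positivity), Real.sqrt_sq (by norm_num : (0:ℝ) ≤ 2)]
  rw [if_neg hσ.ne', if_neg hσ.ne', div_sub_div_same,
    show R + v - (R - v) = 2 * v by ring, chi, ← mul_div_assoc]
  rw [div_eq_div_iff hσ.ne' hQ.ne']
  linear_combination (-v) * hkey


noncomputable def Gfun (T₁ T₃ M u : ℝ) : ℝ :=
  T₃ * chi T₃ (T₁ * chi T₁ u + M * Real.sign u - M)
    + (T₃ * chi T₃ (-(2 * M)) / 2 - T₃ * chi T₃ (-M)) * Real.sign (Real.sign u + 2⁻¹)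
    + T₃ * chi T₃ (-M) * Real.sign u
    - T₃ * chi T₃ (-(2 * M)) / 2

lemma Gfun_approx {T₁ T₃ M B δ : ℝ} (hT₁ : 1 ≤ T₁) (hT₃ : 1 ≤ T₃) (hM : 1 ≤ M)
    (hB : 0 ≤ B) (hδ : 0 < δ) (hδ1 : δ ≤ 1)
    (c1 : B ^ 3 / (2 * T₁ ^ 2) ≤ δ / 3)
    (c2 : (B + 1) ^ 3 / (2 * T₃ ^ 2) ≤ δ / 3)
    (c3 : B + 1 ≤ M)
    (c4 : 2 * T₃ * (B + 1) / M ≤ δ / 3) :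
    ∀ u, |u| ≤ B → |Gfun T₁ T₃ M u - max u 0| ≤ δ := by
  intro u hu
  have hT₁0 : (0:ℝ) < T₁ := by linarith
  have hT₃0 : (0:ℝ) < T₃ := by linarith
  have hM0 : (0:ℝ) < M := by linarith
  have hu3 : |u| ^ 3 ≤ B ^ 3 := pow_le_pow_left₀ (abs_nonneg u) hu 3
  have hlin : |T₁ * chi T₁ u - u| ≤ δ / 3 := by
    calc |T₁ * chi T₁ u - u| ≤ |u| ^ 3 / (2 * T₁ ^ 2) := chi_lin hT₁0 u
      _ ≤ B ^ 3 / (2 * T₁ ^ 2) := by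
          apply div_le_div_of_nonneg_right hu3 ?_ |>.trans_eq rfl
          positivity
      _ ≤ δ / 3 := c1
  set w : ℝ := T₁ * chi T₁ u with hw
  have hwu : |w - u| ≤ δ / 3 := hlin
  have hwB : |w| ≤ B + 1 := by
    have : |w| ≤ |u| + |w - u| := by
      have := abs_add_le u (w - u); simpa [add_comm] using (by
        have h2 : u + (w - u) = w := by ring
        calc |w| = |u + (w - u)| := by rw [h2]
          _ ≤ |u| + |w - u| := abs_add_le _ _)
    linarith
  rcases lt_trichotomy u 0 with hneg | hzero | hpos
  · -- negative branch
    have hs : Real.sign u = -1 := Real.sign_of_neg hneg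
    have hs2 : Real.sign ((-1:ℝ) + 2⁻¹) = -1 := by
      apply Real.sign_of_neg; norm_num
    have hmax : max u 0 = 0 := max_eq_right hneg.le
    have hGf : Gfun T₁ T₃ M u - max u 0
        = T₃ * (chi T₃ (w - 2 * M) - chi T₃ (-(2 * M))) := by
      rw [Gfun, hs, hs2, hmax]
      have harg : T₁ * chi T₁ u + M * (-1) - M = w - 2 * M := by rw [hw]; ring
      rw [harg]
      ring
    rw [hGf]
    have hlip := chi_lip hT₃0 (w - 2 * M) (-(2 * M))
    have hdenom : M ≤ Real.sqrt (T₃ ^ 2 + (w - 2 * M) ^ 2) := by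
      have h1 : |w - 2 * M| ≤ Real.sqrt (T₃ ^ 2 + (w - 2 * M) ^ 2) := abs_le_sqrtq _ _
      have h2 : M ≤ |w - 2 * M| := by
        rw [abs_sub_comm, abs_of_nonneg (by nlinarith [abs_le.1 hwB] : (0:ℝ) ≤ 2 * M - w)]
        nlinarith [abs_le.1 hwB]
      linarith
    have hd : |w - 2 * M - -(2 * M)| = |w| := by congr 1; ring
    rw [abs_mul, abs_of_pos hT₃0]
    calc T₃ * |chi T₃ (w - 2 * M) - chi T₃ (-(2 * M))|
        ≤ T₃ * (2 * |w| / Real.sqrt (T₃ ^ 2 + (w - 2 * M) ^ 2)) := by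
          apply mul_le_mul_of_nonneg_left ?_ hT₃0.le
          rw [← hd]; exact hlip
      _ ≤ T₃ * (2 * (B + 1) / M) := by
          apply mul_le_mul_of_nonneg_left ?_ hT₃0.le
          apply div_le_div₀ (by positivity) (by linarith) hM0 hdenom
      _ = 2 * T₃ * (B + 1) / M := by ring
      _ ≤ δ / 3 := c4
      _ ≤ δ := by linarith
  · -- zero branch
    have h0 : Gfun T₁ T₃ M 0 = 0 := by
      have hs2 : Real.sign ((0:ℝ) + 2⁻¹) = 1 := by
        apply Real.sign_of_pos; norm_num
      rw [Gfun, Real.sign_zero, chi_zero, hs2]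
      have harg : T₁ * 0 + M * 0 - M = -M := by ring
      rw [harg]
      ring
    rw [hzero, h0]
    simpa using hδ.le
  · -- positive branch
    have hs : Real.sign u = 1 := Real.sign_of_pos hpos
    have hs2 : Real.sign ((1:ℝ) + 2⁻¹) = 1 := by
      apply Real.sign_of_pos; norm_num
    have hmax : max u 0 = u := max_eq_left hpos.le
    have hGf : Gfun T₁ T₃ M u - max u 0 = T₃ * chi T₃ w - u := by
      rw [Gfun, hs, hs2, hmax]
      have harg : T₁ * chi T₁ u + M * 1 - M = w := by rw [hw]; ring
      rw [harg]
      ring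
    rw [hGf]
    have h1 : |T₃ * chi T₃ w - w| ≤ (B + 1) ^ 3 / (2 * T₃ ^ 2) := by
      calc |T₃ * chi T₃ w - w| ≤ |w| ^ 3 / (2 * T₃ ^ 2) := chi_lin hT₃0 w
        _ ≤ (B + 1) ^ 3 / (2 * T₃ ^ 2) := by
            apply div_le_div_of_nonneg_right (pow_le_pow_left₀ (abs_nonneg w) hwB 3) ?_
            positivity
    calc |T₃ * chi T₃ w - u| ≤ |T₃ * chi T₃ w - w| + |w - u| := by
          have : T₃ * chi T₃ w - u = (T₃ * chi T₃ w - w) + (w - u) := by ring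
          rw [this]; exact abs_add_le _ _
      _ ≤ (B + 1) ^ 3 / (2 * T₃ ^ 2) + δ / 3 := by linarith
      _ ≤ δ := by linarith


lemma Gfun_params (B δ : ℝ) (hB : 0 ≤ B) (hδ : 0 < δ) (hδ1 : δ ≤ 1) :
    ∃ T₁ T₃ M : ℝ, 1 ≤ T₁ ∧ 1 ≤ T₃ ∧ 1 ≤ M ∧
      ∀ u, |u| ≤ B → |Gfun T₁ T₃ M u - max u 0| ≤ δ := by
  set T : ℝ := max 1 (3 * (B + 1) ^ 3 / δ) with hT
  have hT1 : 1 ≤ T := le_max_left _ _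
  have hT0 : 0 < T := by linarith
  have hTδ : 3 * (B + 1) ^ 3 ≤ T * δ := by
    have h := le_max_right 1 (3 * (B + 1) ^ 3 / δ)
    rw [← hT] at h
    calc 3 * (B + 1) ^ 3 = (3 * (B + 1) ^ 3 / δ) * δ := by field_simp
      _ ≤ T * δ := by apply mul_le_mul_of_nonneg_right h hδ.le
  set M : ℝ := max (B + 1) (6 * T * (B + 1) / δ) with hM
  have hMB : B + 1 ≤ M := le_max_left _ _
  have hM1 : 1 ≤ M := by linarith
  have hM0 : 0 < M := by linarith
  have hMδ : 6 * T * (B + 1) ≤ M * δ := by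
    have h := le_max_right (B + 1) (6 * T * (B + 1) / δ)
    rw [← hM] at h
    calc 6 * T * (B + 1) = (6 * T * (B + 1) / δ) * δ := by field_simp
      _ ≤ M * δ := mul_le_mul_of_nonneg_right h hδ.le
  refine ⟨T, T, M, hT1, hT1, hM1, ?_⟩
  have hBB : B ^ 3 ≤ (B + 1) ^ 3 := pow_le_pow_left₀ hB (by linarith) 3
  have hcube : (0:ℝ) ≤ (B + 1) ^ 3 := by positivity
  have e1 : 3 * (B + 1) ^ 3 * 1 ≤ (T * δ) * T :=
    mul_le_mul hTδ hT1 (by norm_num) (by positivity)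
  have hδT : (0:ℝ) ≤ δ * T ^ 2 := by positivity
  apply Gfun_approx hT1 hT1 hM1 hB hδ hδ1 ?_ ?_ hMB ?_
  · rw [div_le_div_iff₀ (by positivity) (by norm_num)]
    nlinarith [e1, hBB, hcube, hδT]
  · rw [div_le_div_iff₀ (by positivity) (by norm_num)]
    nlinarith [e1, hcube, hδT]
  · rw [div_le_div_iff₀ hM0 (by norm_num)]
    nlinarith [hMδ]


/-! ### Index and matrix machinery -/

def idx {K ns : ℕ} (β : Fin K) (j : Fin ns) : Fin (K * ns) := finProdFinEquiv (β, j)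

lemma idx_divNat {K ns : ℕ} (β : Fin K) (j : Fin ns) : (idx β j).divNat = β := by
  have h := Equiv.symm_apply_apply finProdFinEquiv (β, j)
  rw [finProdFinEquiv_symm_apply] at h
  exact congrArg Prod.fst h

lemma idx_modNat {K ns : ℕ} (β : Fin K) (j : Fin ns) : (idx β j).modNat = j := by
  have h := Equiv.symm_apply_apply finProdFinEquiv (β, j)
  rw [finProdFinEquiv_symm_apply] at h
  exact congrArg Prod.snd h

lemma PLN_idx (ns K : ℕ) (h : Fin (K * ns) → ℝ) (β : Fin K) (j : Fin ns) :
    PLN ns K h (idx β j) = LN (fun j' => h (idx β j')) j := by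
  rw [PLN, idx_divNat, idx_modNat]
  rfl

def mkW (ns : ℕ) {K d : ℕ} (Lc : Fin K → Fin d → ℝ) : Matrix (Fin (K * ns)) (Fin d) ℝ :=
  Matrix.of fun p q => row3 ns 1 (-1) 0 p.modNat * Lc p.divNat q

def mkb (ns : ℕ) {K : ℕ} (Lb : Fin K → ℝ) (Rb : Fin K → Fin ns → ℝ) : Fin (K * ns) → ℝ :=
  fun p => row3 ns 1 (-1) 0 p.modNat * Lb p.divNat + Rb p.divNat p.modNat

lemma mk_eval (ns : ℕ) {K d : ℕ} (Lc : Fin K → Fin d → ℝ) (Lb : Fin K → ℝ)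
    (Rb : Fin K → Fin ns → ℝ) (x : Fin d → ℝ) (β : Fin K) (j : Fin ns) :
    ((mkW ns Lc).mulVec x + mkb ns Lb Rb) (idx β j)
      = row3 ns 1 (-1) 0 j * ((∑ q, Lc β q * x q) + Lb β) + Rb β j := by
  have : (mkW ns Lc).mulVec x (idx β j) = ∑ q, (row3 ns 1 (-1) 0 j * Lc β q) * x q := by
    simp [mkW, Matrix.mulVec, dotProduct, idx_divNat, idx_modNat]
  calc ((mkW ns Lc).mulVec x + mkb ns Lb Rb) (idx β j)
      = (∑ q, (row3 ns 1 (-1) 0 j * Lc β q) * x q)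
        + (row3 ns 1 (-1) 0 j * Lb β + Rb β j) := by
        rw [Pi.add_apply, this, mkb, idx_divNat, idx_modNat]
    _ = row3 ns 1 (-1) 0 j * ((∑ q, Lc β q * x q) + Lb β) + Rb β j := by
        rw [mul_add, Finset.mul_sum]
        have : ∀ q : Fin d, row3 ns 1 (-1) 0 j * Lc β q * x q
            = row3 ns 1 (-1) 0 j * (Lc β q * x q) := fun q => by ring
        rw [Finset.sum_congr rfl fun q _ => this q]
        ring

lemma combS_apply (hns : 3 ≤ ns) (w : ℝ) (j : Fin ns) :
    row3 ns 1 (-1) 0 j * w + 0 = row3 ns w (-w) 0 j := by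
  unfold row3; split_ifs <;> ring

lemma combC_apply (hns : 3 ≤ ns) (R w : ℝ) (j : Fin ns) :
    row3 ns 1 (-1) 0 j * w + row3 ns R R (-(2 * R)) j = row3 ns (R + w) (R - w) (-(2 * R)) j := by
  unfold row3; split_ifs <;> ring

lemma dot_single {m : ℕ} (a : Fin m) (r : ℝ) (h : Fin m → ℝ) :
    ∑ q, (if q = a then r else 0) * h q = r * h a := by
  rw [Finset.sum_eq_single a]
  · simp
  · intro b _ hb; simp [hb]
  · intro ha; exact absurd (Finset.mem_univ a) ha

lemma sign_sign (u : ℝ) : Real.sign (Real.sign u) = Real.sign u := by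
  rcases lt_trichotomy u 0 with h | h | h
  · rw [Real.sign_of_neg h]; exact Real.sign_of_neg (by norm_num)
  · simp [h]
  · rw [Real.sign_of_pos h]; exact Real.sign_of_pos (by norm_num)


/-! ### Block index helpers -/

def bS {k : ℕ} (i : Fin k) : Fin (2 * k) := ⟨i.val, by have := i.isLt; omega⟩
def bC {k : ℕ} (i : Fin k) : Fin (2 * k) := ⟨k + i.val, by have := i.isLt; omega⟩
def gS {k : ℕ} (i : Fin k) : Fin (3 * k) := ⟨i.val, by have := i.isLt; omega⟩
def gH {k : ℕ} (i : Fin k) : Fin (3 * k) := ⟨k + i.val, by have := i.isLt; omega⟩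
def gX {k : ℕ} (i : Fin k) : Fin (3 * k) := ⟨2 * k + i.val, by have := i.isLt; omega⟩

def n1 {k : ℕ} (β : Fin (2 * k)) : Fin k :=
  ⟨β.val % k, Nat.mod_lt _ (by have := β.isLt; omega)⟩
def n2 {k : ℕ} (β : Fin (3 * k)) : Fin k :=
  ⟨β.val % k, Nat.mod_lt _ (by have := β.isLt; omega)⟩

@[simp] lemma bS_val {k : ℕ} (i : Fin k) : (bS i).val = i.val := rfl
@[simp] lemma bC_val {k : ℕ} (i : Fin k) : (bC i).val = k + i.val := rfl
@[simp] lemma gS_val {k : ℕ} (i : Fin k) : (gS i).val = i.val := rfl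
@[simp] lemma gH_val {k : ℕ} (i : Fin k) : (gH i).val = k + i.val := rfl
@[simp] lemma gX_val {k : ℕ} (i : Fin k) : (gX i).val = 2 * k + i.val := rfl

@[simp] lemma n1_bS {k : ℕ} (i : Fin k) : n1 (bS i) = i := by
  apply Fin.ext
  simp [n1, Nat.mod_eq_of_lt i.isLt]
@[simp] lemma n1_bC {k : ℕ} (i : Fin k) : n1 (bC i) = i := by
  apply Fin.ext
  simp [n1, Nat.add_mod_left, Nat.mod_eq_of_lt i.isLt]
@[simp] lemma n2_gS {k : ℕ} (i : Fin k) : n2 (gS i) = i := by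
  apply Fin.ext
  simp [n2, Nat.mod_eq_of_lt i.isLt]
@[simp] lemma n2_gH {k : ℕ} (i : Fin k) : n2 (gH i) = i := by
  apply Fin.ext
  simp [n2, Nat.add_mod_left, Nat.mod_eq_of_lt i.isLt]
@[simp] lemma n2_gX {k : ℕ} (i : Fin k) : n2 (gX i) = i := by
  apply Fin.ext
  have : 2 * k + i.val = i.val + 2 * k := by ring
  simp [n2, this, Nat.add_mul_mod_self_right, Nat.mod_eq_of_lt i.isLt]


lemma sum4_split {m : ℕ} (a1 a2 a3 a4 h : Fin m → ℝ) :
    ∑ q, (a1 q + a2 q + a3 q + a4 q) * h q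
      = (∑ q, a1 q * h q) + (∑ q, a2 q * h q) + (∑ q, a3 q * h q) + (∑ q, a4 q * h q) := by
  rw [← Finset.sum_add_distrib, ← Finset.sum_add_distrib, ← Finset.sum_add_distrib]
  apply Finset.sum_congr rfl
  intros; ring

lemma sum3_split {m : ℕ} (a1 a2 a3 h : Fin m → ℝ) :
    ∑ q, (a1 q + a2 q + a3 q) * h q
      = (∑ q, a1 q * h q) + (∑ q, a2 q * h q) + (∑ q, a3 q * h q) := by
  rw [← Finset.sum_add_distrib, ← Finset.sum_add_distrib]
  apply Finset.sum_congr rfl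
  intros; ring

lemma combS_apply' {ns : ℕ} (w : ℝ) (j : Fin ns) :
    row3 ns 1 (-1) 0 j * w = row3 ns w (-w) 0 j := by
  unfold row3; split_ifs <;> ring

lemma PLN_mk_eval (ns : ℕ) {K d : ℕ} (Lc : Fin K → Fin d → ℝ) (Lb : Fin K → ℝ)
    (Rb : Fin K → Fin ns → ℝ) (x : Fin d → ℝ) (β : Fin K) (j : Fin ns) :
    PLN ns K ((mkW ns Lc).mulVec x + mkb ns Lb Rb) (idx β j)
      = LN (fun j' => row3 ns 1 (-1) 0 j' * ((∑ q, Lc β q * x q) + Lb β) + Rb β j') j := by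
  rw [PLN_idx]
  congr 1
  funext j'
  rw [mk_eval]

lemma gadget {ns k d : ℕ} (hns : 3 ≤ ns) (A : Matrix (Fin k) (Fin d) ℝ) (c : Fin k → ℝ)
    {T₁ T₃ M : ℝ} (hT₁ : 1 ≤ T₁) (hT₃ : 1 ≤ T₃) (hM : 1 ≤ M) :
    ∃ (W₁ : Matrix (Fin (2 * k * ns)) (Fin d) ℝ) (b₁ : Fin (2 * k * ns) → ℝ)
      (W₂ : Matrix (Fin (3 * k * ns)) (Fin (2 * k * ns)) ℝ) (b₂ : Fin (3 * k * ns) → ℝ)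
      (O : Matrix (Fin k) (Fin (3 * k * ns)) ℝ) (o : Fin k → ℝ),
      ∀ (x : Fin d → ℝ) (i : Fin k),
        (O.mulVec (PLN ns (3 * k) (W₂.mulVec (PLN ns (2 * k) (W₁.mulVec x + b₁)) + b₂)) + o) i
          = Gfun T₁ T₃ M ((A.mulVec x + c) i) := by
  have h3 : (0:ℝ) < Real.sqrt 3 := Real.sqrt_pos.2 (by norm_num)
  have hnsR : (0:ℝ) < (ns:ℝ) := Nat.cast_pos.2 (by omega)
  have hcs : (0:ℝ) < Real.sqrt ((ns:ℝ) / 2) := Real.sqrt_pos.2 (by positivity)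
  have hcd : (0:ℝ) < Real.sqrt (2 * (ns:ℝ)) := Real.sqrt_pos.2 (by positivity)
  set cs : ℝ := Real.sqrt ((ns:ℝ) / 2) with hcsdef
  set cd : ℝ := Real.sqrt (2 * (ns:ℝ)) with hcddef
  have hR1 : (0:ℝ) < T₁ / Real.sqrt 3 := by positivity
  have hR3 : (0:ℝ) < T₃ / Real.sqrt 3 := by positivity
  have hR1T : Real.sqrt 3 * (T₁ / Real.sqrt 3) = T₁ := by field_simp
  have hR3T : Real.sqrt 3 * (T₃ / Real.sqrt 3) = T₃ := by field_simp
  set R1 : ℝ := T₁ / Real.sqrt 3 with hR1def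
  set R3 : ℝ := T₃ / Real.sqrt 3 with hR3def
  set jj0 : Fin ns := ⟨0, by omega⟩ with hjj0
  set jj1 : Fin ns := ⟨1, by omega⟩ with hjj1
  refine ⟨mkW ns (fun β q => A (n1 β) q),
    mkb ns (fun β => c (n1 β)) (fun β j => if β.val < k then 0 else row3 ns R1 R1 (-(2 * R1)) j),
    mkW ns (fun β q =>
      if β.val < 2 * k then (if q = idx (bS (n2 β)) jj0 then cs⁻¹ else 0)
      else (if q = idx (bC (n2 β)) jj0 then T₁ * cd⁻¹ else 0)
        + (if q = idx (bC (n2 β)) jj1 then -(T₁ * cd⁻¹) else 0)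
        + (if q = idx (bS (n2 β)) jj0 then M * cs⁻¹ else 0)),
    mkb ns (fun β => if β.val < k then 0 else if β.val < 2 * k then 2⁻¹ else -M)
      (fun β j => if β.val < 2 * k then 0 else row3 ns R3 R3 (-(2 * R3)) j),
    Matrix.of (fun i q =>
      (if q = idx (gX i) jj0 then T₃ * cd⁻¹ else 0)
      + (if q = idx (gX i) jj1 then -(T₃ * cd⁻¹) else 0)
      + (if q = idx (gH i) jj0 then (T₃ * chi T₃ (-(2 * M)) / 2 - T₃ * chi T₃ (-M)) * cs⁻¹ else 0)
      + (if q = idx (gS i) jj0 then T₃ * chi T₃ (-M) * cs⁻¹ else 0)),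
    fun _ => -(T₃ * chi T₃ (-(2 * M)) / 2), ?_⟩
  intro x i
  set u : ℝ := (A.mulVec x + c) i with hu
  have husum : ∀ i' : Fin k, (∑ q, A i' q * x q) + c i' = (A.mulVec x + c) i' := by
    intro i'; rfl
  set h1 : Fin (2 * k * ns) → ℝ := PLN ns (2 * k)
    ((mkW ns (fun β q => A (n1 β) q)).mulVec x
      + mkb ns (fun β => c (n1 β))
          (fun β j => if β.val < k then 0 else row3 ns R1 R1 (-(2 * R1)) j)) with hh1
  -- Layer 1 evaluations
  have e1S : h1 (idx (bS i) jj0) = cs * Real.sign u := by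
    rw [hh1, PLN_idx]
    have hb : (fun j' => ((mkW ns (fun β q => A (n1 β) q)).mulVec x
        + mkb ns (fun β => c (n1 β))
            (fun β j => if β.val < k then 0 else row3 ns R1 R1 (-(2 * R1)) j)) (idx (bS i) j'))
        = row3 ns u (-u) 0 := by
      funext j'
      rw [mk_eval]
      rw [if_pos (show (bS i).val < k from i.isLt)]
      simp only [n1_bS, bS_val]
      simp only [husum, ← hu]
      exact combS_apply hns u j'
    rw [hb, hjj0]
    exact LN_sign hns u
  have e1C : h1 (idx (bC i) jj0) - h1 (idx (bC i) jj1) = cd * chi T₁ u := by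
    rw [hh1, PLN_idx, PLN_idx]
    have hb : (fun j' => ((mkW ns (fun β q => A (n1 β) q)).mulVec x
        + mkb ns (fun β => c (n1 β))
            (fun β j => if β.val < k then 0 else row3 ns R1 R1 (-(2 * R1)) j)) (idx (bC i) j'))
        = row3 ns (R1 + u) (R1 - u) (-(2 * R1)) := by
      funext j'
      rw [mk_eval]
      rw [if_neg (show ¬ (bC i).val < k by simp only [bC_val]; omega)]
      simp only [n1_bC, bC_val]
      simp only [husum, ← hu]
      exact combC_apply hns R1 u j'
    rw [hb, hjj0, hjj1, LN_chi hns hR1 u, hR1T, hcddef]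
  have hcs1 : cs⁻¹ * cs = 1 := inv_mul_cancel₀ hcs.ne'
  have hcd1 : cd⁻¹ * cd = 1 := inv_mul_cancel₀ hcd.ne'
  have fS : cs⁻¹ * h1 (idx (bS i) jj0) = Real.sign u := by
    rw [e1S, ← mul_assoc, hcs1, one_mul]
  have fX : T₁ * cd⁻¹ * (h1 (idx (bC i) jj0) - h1 (idx (bC i) jj1)) = T₁ * chi T₁ u := by
    rw [e1C, mul_assoc, ← mul_assoc cd⁻¹, hcd1, one_mul]
  have hik := i.isLt
  have c1T : (i.val < 2 * k) = True := eq_true (by omega)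
  have c1k : (i.val < k) = True := eq_true hik
  have cHk : (k + i.val < k) = False := eq_false (by omega)
  have cH2k : (k + i.val < 2 * k) = True := eq_true (by omega)
  have cXk : (2 * k + i.val < k) = False := eq_false (by omega)
  have cX2k : (2 * k + i.val < 2 * k) = False := eq_false (by omega)
  have gXw : T₁ * cd⁻¹ * h1 (idx (bC i) jj0) + -(T₁ * cd⁻¹) * h1 (idx (bC i) jj1)
      + M * cs⁻¹ * h1 (idx (bS i) jj0) + -M
      = T₁ * chi T₁ u + M * Real.sign u - M := by
    rw [show T₁ * cd⁻¹ * h1 (idx (bC i) jj0) + -(T₁ * cd⁻¹) * h1 (idx (bC i) jj1)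
        + M * cs⁻¹ * h1 (idx (bS i) jj0) + -M
      = T₁ * cd⁻¹ * (h1 (idx (bC i) jj0) - h1 (idx (bC i) jj1))
        + M * (cs⁻¹ * h1 (idx (bS i) jj0)) + -M by ring, fX, fS]
    ring
  set h2 : Fin (3 * k * ns) → ℝ := PLN ns (3 * k)
    ((mkW ns (fun β q =>
      if β.val < 2 * k then (if q = idx (bS (n2 β)) jj0 then cs⁻¹ else 0)
      else (if q = idx (bC (n2 β)) jj0 then T₁ * cd⁻¹ else 0)
        + (if q = idx (bC (n2 β)) jj1 then -(T₁ * cd⁻¹) else 0)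
        + (if q = idx (bS (n2 β)) jj0 then M * cs⁻¹ else 0))).mulVec h1
      + mkb ns (fun β => if β.val < k then 0 else if β.val < 2 * k then 2⁻¹ else -M)
          (fun β j => if β.val < 2 * k then 0 else row3 ns R3 R3 (-(2 * R3)) j)) with hh2
  have e2S : h2 (idx (gS i) jj0) = cs * Real.sign u := by
    rw [hh2, PLN_mk_eval]
    simp only [n2_gS, gS_val, c1T, c1k, if_true, dot_single, fS, add_zero, combS_apply']
    rw [hjj0, LN_sign hns, sign_sign, ← hcsdef]
  have e2H : h2 (idx (gH i) jj0) = cs * Real.sign (Real.sign u + 2⁻¹) := by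
    rw [hh2, PLN_mk_eval]
    simp only [n2_gH, gH_val, cHk, cH2k, if_true, if_false, dot_single, fS, add_zero,
      combS_apply']
    rw [hjj0, LN_sign hns, ← hcsdef]
  have e2X : h2 (idx (gX i) jj0) - h2 (idx (gX i) jj1)
      = cd * chi T₃ (T₁ * chi T₁ u + M * Real.sign u - M) := by
    rw [hh2, PLN_mk_eval, PLN_mk_eval]
    simp only [n2_gX, gX_val, cXk, cX2k, if_false, sum3_split, dot_single, gXw,
      combC_apply hns]
    rw [hjj0, hjj1, LN_chi hns hR3, hR3T, ← hcddef]
  have hmv : (Matrix.of (fun i q =>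
      (if q = idx (gX i) jj0 then T₃ * cd⁻¹ else 0)
      + (if q = idx (gX i) jj1 then -(T₃ * cd⁻¹) else 0)
      + (if q = idx (gH i) jj0 then (T₃ * chi T₃ (-(2 * M)) / 2 - T₃ * chi T₃ (-M)) * cs⁻¹ else 0)
      + (if q = idx (gS i) jj0 then T₃ * chi T₃ (-M) * cs⁻¹ else 0))).mulVec h2 i
      = T₃ * cd⁻¹ * h2 (idx (gX i) jj0) + -(T₃ * cd⁻¹) * h2 (idx (gX i) jj1)
        + (T₃ * chi T₃ (-(2 * M)) / 2 - T₃ * chi T₃ (-M)) * cs⁻¹ * h2 (idx (gH i) jj0)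
        + T₃ * chi T₃ (-M) * cs⁻¹ * h2 (idx (gS i) jj0) := by
    simp only [Matrix.mulVec, dotProduct, Matrix.of_apply]
    rw [sum4_split, dot_single, dot_single, dot_single, dot_single]
  rw [Pi.add_apply, hmv]
  rw [show T₃ * cd⁻¹ * h2 (idx (gX i) jj0) + -(T₃ * cd⁻¹) * h2 (idx (gX i) jj1)
      + (T₃ * chi T₃ (-(2 * M)) / 2 - T₃ * chi T₃ (-M)) * cs⁻¹ * h2 (idx (gH i) jj0)
      + T₃ * chi T₃ (-M) * cs⁻¹ * h2 (idx (gS i) jj0)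
    = T₃ * cd⁻¹ * (h2 (idx (gX i) jj0) - h2 (idx (gX i) jj1))
      + (T₃ * chi T₃ (-(2 * M)) / 2 - T₃ * chi T₃ (-M)) * (cs⁻¹ * h2 (idx (gH i) jj0))
      + T₃ * chi T₃ (-M) * (cs⁻¹ * h2 (idx (gS i) jj0)) by ring]
  rw [e2X, e2H, e2S]
  rw [Gfun]
  rw [show cs⁻¹ * (cs * Real.sign (Real.sign u + 2⁻¹)) = Real.sign (Real.sign u + 2⁻¹) by
    rw [← mul_assoc, hcs1, one_mul]]
  rw [show cs⁻¹ * (cs * Real.sign u) = Real.sign u by rw [← mul_assoc, hcs1, one_mul]]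
  rw [show T₃ * cd⁻¹ * (cd * chi T₃ (T₁ * chi T₁ u + M * Real.sign u - M))
      = T₃ * chi T₃ (T₁ * chi T₁ u + M * Real.sign u - M) by
    rw [mul_assoc, ← mul_assoc cd⁻¹, hcd1, one_mul]]
  ring


lemma gadget_approx {ns k d : ℕ} (hns : 3 ≤ ns) (A : Matrix (Fin k) (Fin d) ℝ)
    (c : Fin k → ℝ) (B' δ : ℝ) (hB' : 0 ≤ B') (hδ : 0 < δ) (hδ1 : δ ≤ 1) :
    ∃ (W₁ : Matrix (Fin (2 * k * ns)) (Fin d) ℝ) (b₁ : Fin (2 * k * ns) → ℝ)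
      (W₂ : Matrix (Fin (3 * k * ns)) (Fin (2 * k * ns)) ℝ) (b₂ : Fin (3 * k * ns) → ℝ)
      (O : Matrix (Fin k) (Fin (3 * k * ns)) ℝ) (o : Fin k → ℝ),
      ∀ (x : Fin d → ℝ) (i : Fin k), |(A.mulVec x + c) i| ≤ B' →
        |(O.mulVec (PLN ns (3 * k) (W₂.mulVec (PLN ns (2 * k) (W₁.mulVec x + b₁)) + b₂)) + o) i
          - max ((A.mulVec x + c) i) 0| ≤ δ := by
  obtain ⟨T₁, T₃, M, hT₁, hT₃, hM, happrox⟩ := Gfun_params B' δ hB' hδ hδ1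
  obtain ⟨W₁, b₁, W₂, b₂, O, o, heval⟩ := gadget hns A c hT₁ hT₃ hM
  exact ⟨W₁, b₁, W₂, b₂, O, o, fun x i hx => by
    rw [heval x i]; exact happrox _ hx⟩

end PLNA
namespace PLNA

lemma PLNNet_comp_affine {ns N L k m : ℕ} {g : (Fin k → ℝ) → (Fin m → ℝ)}
    (hg : PLNNet ns N L k m g) {e : ℕ} (Mx : Matrix (Fin k) (Fin e) ℝ) (cx : Fin k → ℝ) :
    PLNNet ns N L e m (fun x => g (Mx.mulVec x + cx)) := by
  have key : ∀ (k' : ℕ) (W : Matrix (Fin k') (Fin k) ℝ) (b : Fin k' → ℝ),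
      (fun x : Fin e → ℝ => W.mulVec (Mx.mulVec x + cx) + b)
        = fun x => (W * Mx).mulVec x + (W.mulVec cx + b) := by
    intro k' W b
    funext x
    rw [Matrix.mulVec_add, Matrix.mulVec_mulVec]
    abel
  cases hg with
  | affine W b =>
    show PLNNet ns N 0 e m (fun x => W.mulVec (Mx.mulVec x + cx) + b)
    rw [key]
    exact PLNNet.affine _ _
  | layer hk W b g' hg' =>
    show PLNNet ns N _ e m (fun x => g' (PLN ns _ (W.mulVec (Mx.mulVec x + cx) + b)))
    have : (fun x : Fin e → ℝ => g' (PLN ns _ (W.mulVec (Mx.mulVec x + cx) + b)))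
        = fun x => g' (PLN ns _ ((W * Mx).mulVec x + (W.mulVec cx + b))) := by
      funext x
      rw [congrFun (key _ W b) x]
    rw [this]
    exact PLNNet.layer hk _ _ _ hg'

lemma continuous_affine {d m : ℕ} (W : Matrix (Fin m) (Fin d) ℝ) (b : Fin m → ℝ) :
    Continuous fun x : Fin d → ℝ => W.mulVec x + b := by
  apply Continuous.add ?_ continuous_const
  apply continuous_pi
  intro i
  show Continuous fun x : Fin d → ℝ => ∑ q, W i q * x q
  exact continuous_finset_sum _ fun q _ => continuous_const.mul (continuous_apply q)

lemma PhiNet.continuous {φ : ℝ → ℝ} (hφ : Continuous φ) {N L d m : ℕ}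
    {f : (Fin d → ℝ) → (Fin m → ℝ)} (h : PhiNet φ N L d m f) : Continuous f := by
  induction h with
  | affine W b => exact continuous_affine W b
  | layer hk W b g hg ih =>
    exact ih.comp (continuous_pi fun i =>
      hφ.comp ((continuous_apply i).comp (continuous_affine W b)))

lemma norm_le_of_coords {d : ℕ} (v : Fin d → ℝ) (C : ℝ) (hC : 0 ≤ C)
    (h : ∀ i, |v i| ≤ C) : ‖v‖ ≤ C := by
  rw [pi_norm_le_iff_of_nonneg hC]; simpa [Real.norm_eq_abs] using h

lemma aux {ns N : ℕ} (hns : 3 ≤ ns) {L k m : ℕ} {g : (Fin k → ℝ) → (Fin m → ℝ)}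
    (hg : PhiNet (fun x => max x 0) N L k m g) :
    ∀ B : ℝ, 0 ≤ B → ∀ ε : ℝ, 0 < ε →
      ∃ f, PLNNet ns (3 * N) (2 * L) k m f ∧
        ∀ x : Fin k → ℝ, (∀ i, |x i| ≤ B) → ‖f x - g x‖ < ε := by
  induction hg with
  | @affine d' m' W b =>
    intro B hB ε hε
    exact ⟨_, PLNNet.affine W b, fun x _ => by simpa using hε⟩
  | @layer L' d' k' m' hk W b g' hg' ih =>
    intro B hB ε hε
    -- bound on the affine image
    set B' : ℝ := (∑ i, ∑ q, |W i q|) * B + ∑ i, |b i| with hB'def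
    have hB'0 : 0 ≤ B' := by
      have h1 : (0:ℝ) ≤ ∑ i, ∑ q, |W i q| :=
        Finset.sum_nonneg fun i _ => Finset.sum_nonneg fun q _ => abs_nonneg _
      have h2 : (0:ℝ) ≤ ∑ i, |b i| := Finset.sum_nonneg fun i _ => abs_nonneg _
      positivity
    have hbound : ∀ (x : Fin d' → ℝ), (∀ i, |x i| ≤ B) → ∀ i, |(W.mulVec x + b) i| ≤ B' := by
      intro x hx i
      have h1 : |(W.mulVec x + b) i| ≤ ∑ q, |W i q| * B + |b i| := by
        calc |(W.mulVec x + b) i| = |∑ q, W i q * x q + b i| := rfl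
          _ ≤ |∑ q, W i q * x q| + |b i| := abs_add_le _ _
          _ ≤ (∑ q, |W i q * x q|) + |b i| := by
              gcongr
              exact Finset.abs_sum_le_sum_abs _ _
          _ ≤ (∑ q, |W i q| * B) + |b i| := by
              gcongr with q hq
              rw [abs_mul]
              exact mul_le_mul_of_nonneg_left (hx q) (abs_nonneg _)
      have h2 : ∑ q, |W i q| * B ≤ (∑ i, ∑ q, |W i q|) * B := by
        rw [← Finset.sum_mul]
        apply mul_le_mul_of_nonneg_right ?_ hB
        exact Finset.single_le_sum (f := fun i => ∑ q, |W i q|)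
          (fun i _ => Finset.sum_nonneg fun q _ => abs_nonneg _) (Finset.mem_univ i)
      have h3 : |b i| ≤ ∑ i, |b i| :=
        Finset.single_le_sum (f := fun i => |b i|) (fun i _ => abs_nonneg _) (Finset.mem_univ i)
      rw [hB'def]
      linarith
    -- uniform continuity of g' on a compact ball
    have hgc : Continuous g' := PhiNet.continuous (continuous_id.max continuous_const) hg'
    have hK : IsCompact (Metric.closedBall (0 : Fin k' → ℝ) (B' + 1)) :=
      isCompact_closedBall _ _
    have hUC := hK.uniformContinuousOn_of_continuous hgc.continuousOn
    rw [Metric.uniformContinuousOn_iff] at hUC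
    obtain ⟨δ₂, hδ₂, hUC⟩ := hUC (ε / 2) (half_pos hε)
    set δ : ℝ := min 1 (min (δ₂ / 2) 1) with hδdef
    have hδpos : 0 < δ := by
      apply lt_min (by norm_num)
      exact lt_min (by linarith) (by norm_num)
    have hδ1 : δ ≤ 1 := min_le_left _ _
    have hδδ₂ : δ < δ₂ := by
      calc δ ≤ δ₂ / 2 := (min_le_right _ _).trans (min_le_left _ _)
        _ < δ₂ := by linarith
    -- PLN-net approximating g' on the larger ball
    obtain ⟨fg, hfgnet, hfgclose⟩ := ih (B' + 1) (by linarith) (ε / 2) (half_pos hε)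
    -- the gadget
    obtain ⟨W₁, b₁, W₂, b₂, O, o, hgad⟩ :=
      gadget_approx (k := k') (d := d') hns W b B' δ hB'0 hδpos hδ1
    refine ⟨fun x => fg (O.mulVec (PLN ns (3 * k')
      (W₂.mulVec (PLN ns (2 * k') (W₁.mulVec x + b₁)) + b₂)) + o), ?_, ?_⟩
    · have n3 : PLNNet ns (3 * N) (2 * L') (3 * k' * ns) m'
          (fun h => fg (O.mulVec h + o)) := PLNNet_comp_affine hfgnet O o
      have n2 : PLNNet ns (3 * N) (2 * L' + 1) (2 * k' * ns) m'
          (fun h => (fun h' => fg (O.mulVec h' + o)) (PLN ns (3 * k') (W₂.mulVec h + b₂))) :=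
        PLNNet.layer (by omega) W₂ b₂ _ n3
      have n1 : PLNNet ns (3 * N) (2 * L' + 1 + 1) d' m' _ :=
        PLNNet.layer (by omega) W₁ b₁ _ n2
      have hL : 2 * (L' + 1) = 2 * L' + 1 + 1 := by ring
      rw [hL]
      exact n1
    · intro x hx
      set y : Fin k' → ℝ := O.mulVec (PLN ns (3 * k')
        (W₂.mulVec (PLN ns (2 * k') (W₁.mulVec x + b₁)) + b₂)) + o with hy
      set z : Fin k' → ℝ := fun i => max ((W.mulVec x + b) i) 0 with hz
      have hyz : ∀ i, |y i - z i| ≤ δ := fun i => hgad x i (hbound x hx i)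
      have hzB : ∀ i, |z i| ≤ B' := by
        intro i
        rw [hz]
        have h1 := hbound x hx i
        rw [abs_le] at h1 ⊢
        constructor
        · simp only [le_max_iff]; right; linarith
        · simp only [max_le_iff]; exact ⟨h1.2, by linarith⟩
      have hyB : ∀ i, |y i| ≤ B' + 1 := by
        intro i
        calc |y i| = |z i + (y i - z i)| := by ring_nf
          _ ≤ |z i| + |y i - z i| := abs_add_le _ _
          _ ≤ B' + 1 := by have := hyz i; have := hzB i; linarith
      have hymem : y ∈ Metric.closedBall (0 : Fin k' → ℝ) (B' + 1) := by
        rw [mem_closedBall_zero_iff]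
        exact norm_le_of_coords y (B' + 1) (by linarith) hyB
      have hzmem : z ∈ Metric.closedBall (0 : Fin k' → ℝ) (B' + 1) := by
        rw [mem_closedBall_zero_iff]
        exact norm_le_of_coords z (B' + 1) (by linarith) (fun i => (hzB i).trans (by linarith))
      have hdist : dist y z < δ₂ := by
        rw [dist_eq_norm]
        calc ‖y - z‖ ≤ δ := norm_le_of_coords _ δ hδpos.le (fun i => by
              simpa using hyz i)
          _ < δ₂ := hδδ₂
      have hgyz : ‖g' y - g' z‖ < ε / 2 := by
        rw [← dist_eq_norm]
        exact hUC y hymem z hzmem hdist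
      have hfgy : ‖fg y - g' y‖ < ε / 2 := hfgclose y hyB
      calc ‖fg y - g' z‖ = ‖(fg y - g' y) + (g' y - g' z)‖ := by ring_nf
        _ ≤ ‖fg y - g' y‖ + ‖g' y - g' z‖ := norm_add_le _ _
        _ < ε := by linarith

end PLNA

/-- Approximation of ReLU networks by PLN-Nets: every ReLU network of depth `L` and
width `N` from `[0,1]^d` to `ℝ^n` is `ε`-approximated in the sup norm by a PLN-Net of
depth `2L`, norm size `n_s ≥ 3`, and width `3·n_s·N`. -/
theorem PLNNet_approximates_reluNet (ns N L d n : ℕ) (hns : 3 ≤ ns)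
    (fh : (Fin d → ℝ) → (Fin n → ℝ)) (hfh : PhiNet (fun x => max x 0) N L d n fh)
    (ε : ℝ) (hε : 0 < ε) :
    ∃ f : (Fin d → ℝ) → (Fin n → ℝ), PLNNet ns (3 * N) (2 * L) d n f ∧
      ∀ x ∈ Set.Icc (0 : Fin d → ℝ) 1, ‖f x - fh x‖ < ε := by
  obtain ⟨f, hf, hclose⟩ := PLNA.aux hns hfh 1 zero_le_one ε hε
  refine ⟨f, hf, fun x hx => hclose x fun i => ?_⟩
  obtain ⟨h0, h1⟩ := hx
  rw [abs_le]
  exact ⟨by have := h0 i; simp only [Pi.zero_apply] at this; linarith,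
    by have := h1 i; simp only [Pi.one_apply] at this; linarith⟩
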